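/- Let μ be a doubling measure on ℂ and ρ(z) defined by μ(D(z,ρ(z))) = 1. Then there exist constants C, β, γ > 0 such that C⁻¹|z|^{−γ} ≤ ρ(z) ≤ C|z|^{β} for all |z| > 1. -/

import Mathlib

open MeasureTheory Metric
open scoped ENNReal NNReal

-- iterated doubling
lemma aux_iterD (μ : MeasureTheory.Measure ℂ) (C : ℝ≥0)
    (hC : ∀ z : ℂ, ∀ r : ℝ, 0 < r → μ (ball z (2 * r)) ≤ (C : ℝ≥0∞) * μ (ball z r)) :
    ∀ (n : ℕ) (z : ℂ) (r : ℝ), 0 < r →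
      μ (ball z (2 ^ n * r)) ≤ (C : ℝ≥0∞) ^ n * μ (ball z r) := by
  intro n
  induction n with
  | zero => intro z r hr; simp
  | succ n ih =>
    intro z r hr
    have h1 : (2:ℝ) ^ (n+1) * r = 2 * (2 ^ n * r) := by ring
    rw [h1]
    calc μ (ball z (2 * (2 ^ n * r))) ≤ (C : ℝ≥0∞) * μ (ball z (2 ^ n * r)) :=
          hC z _ (by positivity)
      _ ≤ (C : ℝ≥0∞) * ((C : ℝ≥0∞) ^ n * μ (ball z r)) := by
          exact mul_le_mul_right (ih z r hr) _
      _ = (C : ℝ≥0∞) ^ (n+1) * μ (ball z r) := by ring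

-- reverse doubling
lemma aux_revD (μ : MeasureTheory.Measure ℂ) (C : ℝ≥0) (hC0 : C ≠ 0)
    (hC : ∀ z : ℂ, ∀ r : ℝ, 0 < r → μ (ball z (2 * r)) ≤ (C : ℝ≥0∞) * μ (ball z r)) :
    ∀ (z : ℂ) (s : ℝ), 0 < s →
      ((1 + C⁻¹ ^ 2 : ℝ≥0) : ℝ≥0∞) * μ (ball z s) ≤ μ (ball z (4 * s)) := by
  intro z s hs
  set y : ℂ := z + ((3 * s : ℝ) : ℂ) with hy
  have hdzy : dist z y = 3 * s := by
    rw [hy, dist_self_add_right, Complex.norm_real, Real.norm_eq_abs, abs_of_pos (by positivity)]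
  have h1 : ball z s ⊆ ball y (4 * s) := by
    intro w hw
    rw [mem_ball] at hw ⊢
    calc dist w y ≤ dist w z + dist z y := dist_triangle _ _ _
      _ < s + 3 * s := by rw [hdzy]; linarith
      _ = 4 * s := by ring
  have h2 : ball y s ⊆ ball z (4 * s) := by
    intro w hw
    rw [mem_ball] at hw ⊢
    have : dist z y = 3 * s := hdzy
    calc dist w z ≤ dist w y + dist y z := dist_triangle _ _ _
      _ < s + 3 * s := by rw [dist_comm y z, hdzy]; linarith
      _ = 4 * s := by ring
  have hdisj : Disjoint (ball z s) (ball y s) :=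
    ball_disjoint_ball (by rw [hdzy]; linarith)
  have hy4 : μ (ball y (4 * s)) ≤ (C : ℝ≥0∞) ^ 2 * μ (ball y s) := by
    have h4 : (4:ℝ) * s = 2 * (2 * s) := by ring
    rw [h4]
    calc μ (ball y (2 * (2 * s))) ≤ (C : ℝ≥0∞) * μ (ball y (2 * s)) :=
          hC y _ (by positivity)
      _ ≤ (C : ℝ≥0∞) * ((C : ℝ≥0∞) * μ (ball y s)) := mul_le_mul_right (hC y s hs) _
      _ = (C : ℝ≥0∞) ^ 2 * μ (ball y s) := by ring
  have hzy : μ (ball z s) ≤ (C : ℝ≥0∞) ^ 2 * μ (ball y s) :=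
    (measure_mono h1).trans hy4
  have hCne : (C : ℝ≥0∞) ≠ 0 := by exact_mod_cast hC0
  have hCnt : (C : ℝ≥0∞) ≠ ⊤ := ENNReal.coe_ne_top
  have hys : ((C⁻¹ : ℝ≥0) : ℝ≥0∞) ^ 2 * μ (ball z s) ≤ μ (ball y s) := by
    calc ((C⁻¹ : ℝ≥0) : ℝ≥0∞) ^ 2 * μ (ball z s)
        ≤ ((C⁻¹ : ℝ≥0) : ℝ≥0∞) ^ 2 * ((C : ℝ≥0∞) ^ 2 * μ (ball y s)) :=
          mul_le_mul_right hzy _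
      _ = (((C⁻¹ : ℝ≥0) : ℝ≥0∞) * (C : ℝ≥0∞)) ^ 2 * μ (ball y s) := by ring
      _ = μ (ball y s) := by
          rw [ENNReal.coe_inv hC0, ENNReal.inv_mul_cancel hCne hCnt]; simp
  have hsum : μ (ball z s) + μ (ball y s) ≤ μ (ball z (4 * s)) := by
    rw [← measure_union hdisj measurableSet_ball]
    apply measure_mono
    apply Set.union_subset _ h2
    exact ball_subset_ball (by linarith)
  calc ((1 + C⁻¹ ^ 2 : ℝ≥0) : ℝ≥0∞) * μ (ball z s)
      = μ (ball z s) + ((C⁻¹ : ℝ≥0) : ℝ≥0∞) ^ 2 * μ (ball z s) := by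
        push_cast
        ring
    _ ≤ μ (ball z s) + μ (ball y s) := add_le_add_right hys _
    _ ≤ μ (ball z (4 * s)) := hsum

-- iterated reverse doubling
lemma aux_revDiter (μ : MeasureTheory.Measure ℂ) (C : ℝ≥0) (hC0 : C ≠ 0)
    (hC : ∀ z : ℂ, ∀ r : ℝ, 0 < r → μ (ball z (2 * r)) ≤ (C : ℝ≥0∞) * μ (ball z r)) :
    ∀ (m : ℕ) (z : ℂ) (s : ℝ), 0 < s →
      ((1 + C⁻¹ ^ 2 : ℝ≥0) : ℝ≥0∞) ^ m * μ (ball z s) ≤ μ (ball z (4 ^ m * s)) := by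
  intro m
  induction m with
  | zero => intro z s hs; simp
  | succ m ih =>
    intro z s hs
    have h1 : (4:ℝ) ^ (m+1) * s = 4 * (4 ^ m * s) := by ring
    rw [h1]
    calc ((1 + C⁻¹ ^ 2 : ℝ≥0) : ℝ≥0∞) ^ (m+1) * μ (ball z s)
        = ((1 + C⁻¹ ^ 2 : ℝ≥0) : ℝ≥0∞) * (((1 + C⁻¹ ^ 2 : ℝ≥0) : ℝ≥0∞) ^ m * μ (ball z s)) := by
          ring
      _ ≤ ((1 + C⁻¹ ^ 2 : ℝ≥0) : ℝ≥0∞) * μ (ball z (4 ^ m * s)) :=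
          mul_le_mul_right (ih z s hs) _
      _ ≤ μ (ball z (4 * (4 ^ m * s))) := aux_revD μ C hC0 hC z _ (by positivity)

/-- `μ` is doubling: there is `C` with `μ(D(z,2r)) ≤ C·μ(D(z,r))`. -/
def Doubling (μ : MeasureTheory.Measure ℂ) : Prop :=
  ∃ C : ℝ≥0, ∀ z : ℂ, ∀ r : ℝ, 0 < r → μ (ball z (2 * r)) ≤ (C : ℝ≥0∞) * μ (ball z r)

/-- Polynomial growth/decay of `ρ`: if `μ` is doubling on `ℂ` and `ρ(z)` satisfies
`μ(D(z,ρ(z))) = 1`, then there are `C, β, γ > 0` with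
`C⁻¹|z|^{−γ} ≤ ρ(z) ≤ C|z|^{β}` for `|z| > 1`. -/
theorem stmt18 (μ : MeasureTheory.Measure ℂ) (hμ : Doubling μ)
    (ρ : ℂ → ℝ) (hρpos : ∀ z, 0 < ρ z) (hρ : ∀ z, μ (ball z (ρ z)) = 1) :
    ∃ C β γ : ℝ, 0 < C ∧ 0 < β ∧ 0 < γ ∧
      ∀ z : ℂ, 1 < ‖z‖ →
        C⁻¹ * ‖z‖ ^ (-γ) ≤ ρ z ∧ ρ z ≤ C * ‖z‖ ^ β := by
  classical
  obtain ⟨C0, hC0⟩ := hμ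
  set C : ℝ≥0 := max C0 1 with hCdef
  have hC1 : (1:ℝ≥0) ≤ C := le_max_right _ _
  have hCne : C ≠ 0 := by
    intro h; rw [h] at hC1; exact absurd hC1 (by simp)
  have hC : ∀ z : ℂ, ∀ r : ℝ, 0 < r → μ (ball z (2 * r)) ≤ (C : ℝ≥0∞) * μ (ball z r) := by
    intro z r hr
    exact (hC0 z r hr).trans
      (mul_le_mul_left (ENNReal.coe_le_coe.mpr (le_max_left _ _)) _)
  set r₀ : ℝ := ρ 0 with hr0def
  have hr0 : 0 < r₀ := hρpos 0
  -- upper bound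
  have hub : ∀ z : ℂ, ρ z ≤ 4 * (‖z‖ + r₀) := by
    intro z
    by_contra h
    push_neg at h
    set s : ℝ := ‖z‖ + r₀ with hsdef
    have hs : 0 < s := add_pos_of_nonneg_of_pos (norm_nonneg _) hr0
    have h1 : (1:ℝ≥0∞) ≤ μ (ball z s) := by
      rw [← hρ 0]
      apply measure_mono
      intro w hw
      rw [mem_ball] at hw ⊢
      have hz0 : dist (0:ℂ) z = ‖z‖ := by
        rw [Complex.dist_eq]; simp
      calc dist w z ≤ dist w 0 + dist 0 z := dist_triangle _ _ _
        _ < r₀ + ‖z‖ := by rw [hz0]; exact add_lt_add_left hw _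
        _ = s := by rw [hsdef]; ring
    have h2 : μ (ball z (4 * s)) ≤ 1 := by
      rw [← hρ z]; exact measure_mono (ball_subset_ball h.le)
    have h4 : ((1 + C⁻¹ ^ 2 : ℝ≥0) : ℝ≥0∞) ≤ 1 := by
      calc ((1 + C⁻¹ ^ 2 : ℝ≥0) : ℝ≥0∞) = ((1 + C⁻¹ ^ 2 : ℝ≥0) : ℝ≥0∞) * 1 := (mul_one _).symm
        _ ≤ ((1 + C⁻¹ ^ 2 : ℝ≥0) : ℝ≥0∞) * μ (ball z s) := mul_le_mul_right h1 _
        _ ≤ μ (ball z (4 * s)) := aux_revD μ C hCne hC z s hs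
        _ ≤ 1 := h2
    have h5 : (1 + C⁻¹ ^ 2 : ℝ≥0) ≤ 1 := by exact_mod_cast h4
    have h6 : (1:ℝ) + ((C:ℝ))⁻¹ ^ 2 ≤ 1 := by
      have := NNReal.coe_le_coe.mpr h5
      push_cast at this
      exact this
    have hcr : (1:ℝ) ≤ (C:ℝ) := by exact_mod_cast hC1
    have hcr0 : (0:ℝ) < (C:ℝ) := by linarith
    have hpos : (0:ℝ) < ((C:ℝ))⁻¹ ^ 2 := by positivity
    linarith
  -- choice of p
  set c : ℝ := (C : ℝ) with hcdef
  have hc1 : (1:ℝ) ≤ c := by exact_mod_cast hC1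
  set δ : ℝ := (c⁻¹) ^ 2 with hδdef
  have hδ : 0 < δ := by positivity
  obtain ⟨p, hp⟩ := pow_unbounded_of_one_lt (y := 1 + δ) c (by linarith)
  -- constants
  set K : ℝ := 2 * (2 + r₀) / r₀ with hKdef
  have hK : 0 < K := by positivity
  set A : ℝ := 4 ^ p * K ^ (2 * p) with hAdef
  have hA : 0 < A := by positivity
  refine ⟨max (4 * (1 + r₀)) A, 1, 2 * (p:ℝ) + 1, ?_, one_pos, by positivity, ?_⟩
  · exact lt_of_lt_of_le (by positivity) (le_max_left _ _)
  intro z hz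
  set a : ℝ := ‖z‖ with hadef
  have ha0 : (0:ℝ) < a := lt_trans one_pos hz
  constructor
  · -- lower bound
    -- choose j
    have hex : ∃ j : ℕ, (2 * a + r₀) / r₀ < 2 ^ j :=
      pow_unbounded_of_one_lt _ (one_lt_two : (1:ℝ) < 2)
    set j := Nat.find hex with hjdef
    have hj1 : (2 * a + r₀) / r₀ < 2 ^ j := Nat.find_spec hex
    have hjne : j ≠ 0 := by
      intro h0
      have := hj1
      rw [h0] at this
      rw [div_lt_iff₀ hr0] at this
      simp at this
      linarith
    have hjmin : ¬ ((2 * a + r₀) / r₀ < 2 ^ (j - 1)) :=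
      Nat.find_min hex (Nat.sub_lt (Nat.pos_of_ne_zero hjne) one_pos)
    push_neg at hjmin
    have hj2 : (2:ℝ) ^ j ≤ 2 * ((2 * a + r₀) / r₀) := by
      have he : (2:ℝ) ^ j = 2 * 2 ^ (j - 1) := by
        rw [← pow_succ']
        congr 1
        omega
      rw [he]
      linarith [hjmin]
    set s₀ : ℝ := a + r₀ with hs₀def
    have hs₀ : 0 < s₀ := by linarith
    have hsub : ball z s₀ ⊆ ball (0:ℂ) (2 ^ j * r₀) := by
      intro w hw
      rw [mem_ball] at hw ⊢
      have hz0 : dist z (0:ℂ) = a := by rw [Complex.dist_eq]; simp [hadef]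
      have h2j : 2 * a + r₀ < 2 ^ j * r₀ := by
        rw [div_lt_iff₀ hr0] at hj1; linarith
      calc dist w 0 ≤ dist w z + dist z 0 := dist_triangle _ _ _
        _ < s₀ + a := by rw [hz0]; exact add_lt_add_left hw _
        _ = 2 * a + r₀ := by rw [hs₀def]; ring
        _ < 2 ^ j * r₀ := h2j
    have hμj : μ (ball z s₀) ≤ (C : ℝ≥0∞) ^ j := by
      calc μ (ball z s₀) ≤ μ (ball 0 (2 ^ j * r₀)) := measure_mono hsub
        _ ≤ (C : ℝ≥0∞) ^ j * μ (ball 0 r₀) := aux_iterD μ C hC j 0 r₀ hr0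
        _ = (C : ℝ≥0∞) ^ j := by rw [hr0def, hρ 0, mul_one]
    set m : ℕ := p * (j + 1) with hmdef
    have hcore : s₀ / 4 ^ m < ρ z := by
      by_contra hcon
      push_neg at hcon
      have hs' : (0:ℝ) < s₀ / 4 ^ m := by positivity
      have h1 : (1:ℝ≥0∞) ≤ μ (ball z (s₀ / 4 ^ m)) := by
        rw [← hρ z]; exact measure_mono (ball_subset_ball hcon)
      have h2 := aux_revDiter μ C hCne hC m z (s₀ / 4 ^ m) hs'
      have h3 : (4:ℝ) ^ m * (s₀ / 4 ^ m) = s₀ := by field_simp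
      rw [h3] at h2
      have h4 : ((1 + C⁻¹ ^ 2 : ℝ≥0) : ℝ≥0∞) ^ m ≤ (C : ℝ≥0∞) ^ j := by
        calc ((1 + C⁻¹ ^ 2 : ℝ≥0) : ℝ≥0∞) ^ m
            = ((1 + C⁻¹ ^ 2 : ℝ≥0) : ℝ≥0∞) ^ m * 1 := (mul_one _).symm
          _ ≤ ((1 + C⁻¹ ^ 2 : ℝ≥0) : ℝ≥0∞) ^ m * μ (ball z (s₀ / 4 ^ m)) :=
              mul_le_mul_right h1 _
          _ ≤ μ (ball z s₀) := h2
          _ ≤ (C : ℝ≥0∞) ^ j := hμj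
      have h5 : ((1 + C⁻¹ ^ 2 : ℝ≥0)) ^ m ≤ (C : ℝ≥0) ^ j := by exact_mod_cast h4
      have h6 : ((1:ℝ) + δ) ^ m ≤ c ^ j := by
        have := NNReal.coe_le_coe.mpr h5
        push_cast at this
        rw [hδdef, hcdef]
        convert this using 2
      have h7 : c ^ j < (1 + δ) ^ m := by
        have hj' : c ^ (j + 1) < ((1 + δ) ^ p) ^ (j + 1) :=
          pow_lt_pow_left₀ hp (by linarith) (Nat.succ_ne_zero j)
        calc c ^ j ≤ c ^ (j + 1) := by
              rw [pow_succ]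
              exact le_mul_of_one_le_right (pow_nonneg (by linarith) _) hc1
          _ < ((1 + δ) ^ p) ^ (j + 1) := hj'
          _ = (1 + δ) ^ m := by rw [← pow_mul, hmdef]
      linarith
    -- final algebra
    have h2ja : (2:ℝ) ^ j ≤ K * a := by
      have : 2 * ((2 * a + r₀) / r₀) ≤ K * a := by
        rw [hKdef, div_mul_eq_mul_div, ← mul_div_assoc, div_le_div_iff₀ hr0 hr0]
        nlinarith [mul_nonneg (mul_nonneg hr0.le hr0.le) (sub_nonneg.mpr hz.le)]
      linarith [hj2]
    have h4m : (4:ℝ) ^ m ≤ A * a ^ (2 * p) := by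
      have he : (4:ℝ) ^ m = 4 ^ p * ((2:ℝ) ^ j) ^ (2 * p) := by
        rw [hmdef]
        rw [← pow_mul]
        have : (4:ℝ) = 2 ^ 2 := by norm_num
        rw [this, ← pow_mul, ← pow_mul, ← pow_add]
        congr 1
        ring
      rw [he, hAdef]
      have h1 : ((2:ℝ) ^ j) ^ (2 * p) ≤ (K * a) ^ (2 * p) :=
        pow_le_pow_left₀ (by positivity) h2ja _
      calc (4:ℝ) ^ p * ((2:ℝ) ^ j) ^ (2 * p) ≤ 4 ^ p * (K * a) ^ (2 * p) := by
            exact mul_le_mul_of_nonneg_left h1 (by positivity)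
        _ = 4 ^ p * K ^ (2 * p) * a ^ (2 * p) := by rw [mul_pow]; ring
    have hρz : (A * a ^ (2 * p + 1))⁻¹ ≤ ρ z := by
      have hstep : (A * a ^ (2 * p + 1))⁻¹ ≤ s₀ / 4 ^ m := by
        rw [inv_eq_one_div, div_le_div_iff₀ (by positivity) (by positivity)]
        have h1 : (1:ℝ) * 4 ^ m ≤ A * a ^ (2 * p) * a := by
          rw [one_mul]
          calc (4:ℝ) ^ m ≤ A * a ^ (2 * p) := h4m
            _ ≤ A * a ^ (2 * p) * a := le_mul_of_one_le_right (by positivity) (le_of_lt hz)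
        calc (1:ℝ) * 4 ^ m ≤ A * a ^ (2 * p) * a := h1
          _ = a ^ (2 * p + 1) * A := by ring
          _ ≤ s₀ * (A * a ^ (2 * p + 1)) := by
              have hs₀1 : (1:ℝ) ≤ s₀ := by rw [hs₀def]; linarith
              nlinarith [mul_nonneg (mul_nonneg (sub_nonneg.mpr hs₀1) hA.le)
                (pow_pos ha0 (2*p+1)).le]
      linarith [hcore]
    -- convert rpow
    have hrpow : a ^ (-(2 * (p:ℝ) + 1)) = (a ^ (2 * p + 1) : ℝ)⁻¹ := by
      rw [Real.rpow_neg (le_of_lt ha0)]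
      congr 1
      have : (2 * (p:ℝ) + 1) = ((2 * p + 1 : ℕ) : ℝ) := by push_cast; ring
      rw [this, Real.rpow_natCast]
    rw [hrpow]
    have hfin : (max (4 * (1 + r₀)) A)⁻¹ * (a ^ (2 * p + 1))⁻¹ ≤ (A * a ^ (2 * p + 1))⁻¹ := by
      rw [mul_inv]
      apply mul_le_mul_of_nonneg_right _ (by positivity)
      exact inv_anti₀ hA (le_max_right _ _)
    linarith [hρz, hfin]
  · -- upper bound
    rw [Real.rpow_one]
    calc ρ z ≤ 4 * (a + r₀) := hub z
      _ ≤ 4 * (a + r₀ * a) := by nlinarith [hr0, hz]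
      _ = 4 * (1 + r₀) * a := by ring
      _ ≤ max (4 * (1 + r₀)) A * a :=
          mul_le_mul_of_nonneg_right (le_max_left _ _) (le_of_lt ha0)
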